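/- Let a, k, b, v ∈ ℕ with a < 2^k, b < 2^v and v ≥ 1, and let q = a + 2^k·b̄_{v,∞} ∈ ℤ₂. Suppose the binary digits of Φ(q) are eventually periodic with preperiod u ∈ ℕ and period p ∈ ℕ, p ≥ 1, i.e., R_{u+p}(Φ(q)) = R_u(Φ(q)). Let t ∈ ℕ be such that k + tv ≥ u. Then for every positive integer H, R_{k+tv}(Φ(L_{k+tv}(q))) ≡ R_{k+(t+p·2^H)v}(Φ(L_{k+(t+p·2^H)v}(q))) (mod 2^{H+2}). -/

import Mathlib

noncomputable section

/-- The inverse of `3` in the ring of 2-adic integers. -/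
def inv3 : ℤ_[2] := Ring.inverse 3

/-- The `j`-th binary digit of a 2-adic integer (as `0` or `1`). -/
def dig (x : ℤ_[2]) (j : ℕ) : ℕ := if Nat.testBit (x.appr (j + 1)) j then 1 else 0

/-- The number of one digits of `x` in positions `< j`. -/
def digCount (x : ℤ_[2]) (j : ℕ) : ℕ := ∑ i ∈ Finset.range j, dig x i

/-- Bernstein's formula for the 3x+1 conjugacy map `Φ`:
if `x = ∑_i 2^{d_i}` with `d_0 < d_1 < ⋯`, then `Φ x = -∑_i 2^{d_i} 3^{-i}`. -/
def Phi (x : ℤ_[2]) : ℤ_[2] :=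
  -∑' j : ℕ, (dig x j : ℤ_[2]) * 2 ^ j * inv3 ^ digCount x j

/-- `L_k(x)`: the unique natural number `< 2^k` congruent to `x` mod `2^k`. -/
def Lk (k : ℕ) (x : ℤ_[2]) : ℕ := x.appr k

theorem two_pow_dvd_sub_appr (k : ℕ) (x : ℤ_[2]) :
    (2 : ℤ_[2]) ^ k ∣ x - (x.appr k : ℤ_[2]) := by
  have h := PadicInt.appr_spec k x
  rw [Ideal.mem_span_singleton] at h
  exact_mod_cast h

theorem exists_Rk (k : ℕ) (x : ℤ_[2]) :
    ∃ z : ℤ_[2], x = (x.appr k : ℤ_[2]) + 2 ^ k * z := by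
  obtain ⟨c, hc⟩ := two_pow_dvd_sub_appr k x
  exact ⟨c, by rw [← hc]; ring⟩

/-- `R_k(x)`: the unique 2-adic integer with `x = L_k(x) + 2^k · R_k(x)`. -/
def Rk (k : ℕ) (x : ℤ_[2]) : ℤ_[2] := (exists_Rk k x).choose

/-- `α(a)`: the number of ones in the binary expansion of `a`. -/
def alphaNat (a : ℕ) : ℕ := (Nat.bits a).count true

/-- `b̄_{v,∞} = b · ∑_{i=0}^∞ 2^{v i}` as a 2-adic integer. -/
def bbar (b v : ℕ) : ℤ_[2] := (b : ℤ_[2]) * ∑' i : ℕ, (2 : ℤ_[2]) ^ (v * i)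

/-- `b̄_{v,t} = b · ∑_{i=0}^{t-1} 2^{v i}` as a natural number. -/
def bbarFin (b v t : ℕ) : ℕ := b * ∑ i ∈ Finset.range t, 2 ^ (v * i)

/-- The farPoint `fP(x,k)`: the least `r` such that no 2-adic congruent to `x`
mod `2^k` is a fixed point of `Φ` mod `2^{k+r}`, and `∞` if no such `r` exists. -/
def fP (x k : ℕ) : ℕ∞ :=
  sInf ((↑) '' {r : ℕ | ∀ z : ℤ_[2],
    (2 : ℤ_[2]) ^ k ∣ z - (x : ℤ_[2]) → ¬ (2 : ℤ_[2]) ^ (k + r) ∣ Phi z - z})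

end

noncomputable section Aux12

namespace Aux12

lemma norm_two : ‖(2 : ℤ_[2])‖ = 1 / 2 := by
  have h := @PadicInt.norm_p 2 _
  norm_num at h ⊢
  exact_mod_cast h

lemma two_nz : (2 : ℤ_[2]) ≠ 0 := by
  intro h
  have := norm_two
  rw [h, norm_zero] at this
  norm_num at this

lemma appr_unique {N : ℕ} (z : ℤ_[2]) {c : ℕ} (hc : c < 2 ^ N)
    (h : (2 : ℤ_[2]) ^ N ∣ z - (c : ℤ_[2])) : z.appr N = c := by
  have h1 := two_pow_dvd_sub_appr N z
  have h2 : (2 : ℤ_[2]) ^ N ∣ ((z.appr N : ℤ_[2]) - (c : ℤ_[2])) := by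
    have h3 := dvd_sub h h1
    rw [show z - (c : ℤ_[2]) - (z - (z.appr N : ℤ_[2])) =
        (z.appr N : ℤ_[2]) - (c : ℤ_[2]) from by ring] at h3
    exact h3
  have h4 : ((2 : ℕ) : ℤ_[2]) ^ N ∣ (((z.appr N : ℤ) - (c : ℤ) : ℤ) : ℤ_[2]) := by
    push_cast
    exact_mod_cast h2
  rw [PadicInt.pow_p_dvd_int_iff] at h4
  have hlt := PadicInt.appr_lt z N
  have h5 : ((2 ^ N : ℕ) : ℤ) ∣ (z.appr N : ℤ) - (c : ℤ) := by
    have e1 : (((2 : ℕ) : ℤ)) ^ N = ((2 ^ N : ℕ) : ℤ) := by push_cast; ring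
    rw [← e1]
    exact_mod_cast h4
  have h6 : (z.appr N : ℤ) - (c : ℤ) = 0 := by
    apply Int.eq_zero_of_abs_lt_dvd h5
    rw [abs_sub_lt_iff]
    omega
  omega

lemma appr_congr {N : ℕ} {x y : ℤ_[2]} (h : (2 : ℤ_[2]) ^ N ∣ x - y) :
    x.appr N = y.appr N := by
  apply appr_unique x (PadicInt.appr_lt y N)
  have h1 := two_pow_dvd_sub_appr N y
  have h2 := dvd_add h h1
  rw [show x - y + (y - (y.appr N : ℤ_[2])) = x - (y.appr N : ℤ_[2]) from by ring] at h2
  exact h2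

lemma appr_natCast {N c : ℕ} (hc : c < 2 ^ N) : ((c : ℤ_[2])).appr N = c :=
  appr_unique _ hc (by simp)

lemma appr_shift {m c : ℕ} (hc : c < 2 ^ m) (y : ℤ_[2]) (s : ℕ) :
    ((c : ℤ_[2]) + 2 ^ m * y).appr (m + s) = c + 2 ^ m * y.appr s := by
  apply appr_unique
  · have h1 : y.appr s < 2 ^ s := PadicInt.appr_lt y s
    have h2 : 2 ^ m * y.appr s + c < 2 ^ m * 2 ^ s := by
      calc 2 ^ m * y.appr s + c < 2 ^ m * y.appr s + 2 ^ m := by omega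
        _ = 2 ^ m * (y.appr s + 1) := by ring
        _ ≤ 2 ^ m * 2 ^ s := Nat.mul_le_mul_left _ (by omega)
    rw [pow_add]
    omega
  · obtain ⟨w, hw⟩ := two_pow_dvd_sub_appr s y
    refine ⟨w, ?_⟩
    push_cast
    rw [pow_add]
    linear_combination (2 : ℤ_[2]) ^ m * hw

lemma dig_congr {j : ℕ} {x y : ℤ_[2]} (h : (2 : ℤ_[2]) ^ (j + 1) ∣ x - y) :
    dig x j = dig y j := by
  unfold dig
  rw [appr_congr h]

lemma digCount_congr {n : ℕ} {x y : ℤ_[2]} (h : (2 : ℤ_[2]) ^ n ∣ x - y) {j : ℕ}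
    (hj : j ≤ n) : digCount x j = digCount y j := by
  unfold digCount
  refine Finset.sum_congr rfl fun i hi => ?_
  rw [Finset.mem_range] at hi
  exact dig_congr (dvd_trans (pow_dvd_pow 2 (by omega)) h)

lemma dig_shift {m c : ℕ} (hc : c < 2 ^ m) (y : ℤ_[2]) (r : ℕ) :
    dig ((c : ℤ_[2]) + 2 ^ m * y) (m + r) = dig y r := by
  unfold dig
  rw [show m + r + 1 = m + (r + 1) from by omega, appr_shift hc]
  have hbit : (c + 2 ^ m * y.appr (r + 1)).testBit (m + r) = (y.appr (r + 1)).testBit r := by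
    rw [Nat.add_comm c, Nat.mul_comm]
    rw [Nat.mul_comm (y.appr (r + 1)) (2 ^ m)]
    rw [Nat.testBit_two_pow_mul_add _ hc]
    rw [if_neg (by omega), Nat.add_sub_cancel_left]
  rw [hbit]

lemma dig_natCast_high {c j : ℕ} (hc : c < 2 ^ j) : dig (c : ℤ_[2]) j = 0 := by
  unfold dig
  rw [appr_natCast (lt_of_lt_of_le hc (Nat.pow_le_pow_right (by norm_num) (Nat.le_succ j)))]
  simp [Nat.testBit_lt_two_pow hc]

lemma digCount_split (x : ℤ_[2]) (m r : ℕ) :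
    digCount x (m + r) = digCount x m + ∑ i ∈ Finset.range r, dig x (m + i) := by
  induction r with
  | zero => simp
  | succ r ih =>
    rw [show m + (r + 1) = (m + r) + 1 from by omega]
    unfold digCount at *
    rw [Finset.sum_range_succ, ih, Finset.sum_range_succ]
    omega

/-- A generic summability criterion. -/
lemma summable_of_bound (f : ℕ → ℤ_[2]) (h : ∀ r, ‖f r‖ ≤ (1 / 2 : ℝ) ^ r) : Summable f :=
  Summable.of_norm_bounded summable_geometric_two h

lemma norm_term_le (d c j : ℕ) :
    ‖(d : ℤ_[2]) * 2 ^ j * inv3 ^ c‖ ≤ (1 / 2 : ℝ) ^ j := by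
  rw [norm_mul, norm_mul, norm_pow, norm_two]
  have h1 : ‖(d : ℤ_[2])‖ ≤ 1 := PadicInt.norm_le_one _
  have h2 : ‖inv3 ^ c‖ ≤ 1 := PadicInt.norm_le_one _
  have h3 : (0 : ℝ) ≤ (1 / 2 : ℝ) ^ j := by positivity
  have h4 : ‖(d : ℤ_[2])‖ * (1 / 2 : ℝ) ^ j * ‖inv3 ^ c‖ ≤ 1 * (1 / 2 : ℝ) ^ j * 1 :=
    mul_le_mul (mul_le_mul h1 le_rfl h3 zero_le_one) h2 (norm_nonneg _) (by positivity)
  linarith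

lemma summable_trm (x : ℤ_[2]) :
    Summable (fun j => (dig x j : ℤ_[2]) * 2 ^ j * inv3 ^ digCount x j) :=
  summable_of_bound _ fun j => norm_term_le _ _ _

lemma summable_tail (x : ℤ_[2]) (n : ℕ) :
    Summable (fun r => (dig x (n + r) : ℤ_[2]) * 2 ^ r * inv3 ^ digCount x (n + r)) :=
  summable_of_bound _ fun r => norm_term_le _ _ _

/-- The tail sum `W` of `Φ` past position `n`. -/
def tailW (x : ℤ_[2]) (n : ℕ) : ℤ_[2] :=
  ∑' r : ℕ, (dig x (n + r) : ℤ_[2]) * 2 ^ r * inv3 ^ digCount x (n + r)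

lemma phi_tail (x : ℤ_[2]) (n : ℕ) :
    Phi ((x.appr n : ℕ) : ℤ_[2]) = Phi x + 2 ^ n * tailW x n := by
  set c := x.appr n with hc
  have hdvd : (2 : ℤ_[2]) ^ n ∣ x - (c : ℤ_[2]) := two_pow_dvd_sub_appr n x
  have hdvd' : (2 : ℤ_[2]) ^ n ∣ (c : ℤ_[2]) - x := by
    rw [show (c : ℤ_[2]) - x = -(x - (c : ℤ_[2])) from by ring]
    exact dvd_neg.mpr hdvd
  have hclt : c < 2 ^ n := PadicInt.appr_lt x n
  have hlow : ∀ j < n, (dig (c : ℤ_[2]) j : ℤ_[2]) * 2 ^ j * inv3 ^ digCount (c : ℤ_[2]) j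
      = (dig x j : ℤ_[2]) * 2 ^ j * inv3 ^ digCount x j := by
    intro j hj
    rw [dig_congr (dvd_trans (pow_dvd_pow 2 (by omega)) hdvd'),
      digCount_congr hdvd' (le_of_lt hj)]
  have hhigh : ∀ i : ℕ, (dig (c : ℤ_[2]) (i + n) : ℤ_[2]) * 2 ^ (i + n) *
      inv3 ^ digCount (c : ℤ_[2]) (i + n) = 0 := by
    intro i
    have : dig (c : ℤ_[2]) (i + n) = 0 :=
      dig_natCast_high (lt_of_lt_of_le hclt (Nat.pow_le_pow_right (by norm_num) (by omega)))
    rw [this]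
    simp
  have hsx := summable_trm x
  have hsc := summable_trm ((c : ℤ_[2]))
  have hx := Summable.sum_add_tsum_nat_add (f := fun j => (dig x j : ℤ_[2]) * 2 ^ j * inv3 ^ digCount x j)
    n hsx
  have hcs := Summable.sum_add_tsum_nat_add
    (f := fun j => (dig (c : ℤ_[2]) j : ℤ_[2]) * 2 ^ j * inv3 ^ digCount (c : ℤ_[2]) j) n hsc
  have hc0 : (∑' i : ℕ, (dig (c : ℤ_[2]) (i + n) : ℤ_[2]) * 2 ^ (i + n) *
      inv3 ^ digCount (c : ℤ_[2]) (i + n)) = 0 := by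
    rw [tsum_congr hhigh]
    exact tsum_zero
  have htail : (∑' i : ℕ, (dig x (i + n) : ℤ_[2]) * 2 ^ (i + n) * inv3 ^ digCount x (i + n))
      = 2 ^ n * tailW x n := by
    rw [show (fun i : ℕ => (dig x (i + n) : ℤ_[2]) * 2 ^ (i + n) * inv3 ^ digCount x (i + n))
        = fun i : ℕ => (2 : ℤ_[2]) ^ n * ((dig x (n + i) : ℤ_[2]) * 2 ^ i *
          inv3 ^ digCount x (n + i)) from ?_]
    · exact Summable.tsum_mul_left _ (summable_tail x n)
    · funext i
      rw [show i + n = n + i from by omega, pow_add]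
      ring
  have hsum : (∑ i ∈ Finset.range n, (dig (c : ℤ_[2]) i : ℤ_[2]) * 2 ^ i *
      inv3 ^ digCount (c : ℤ_[2]) i) = ∑ i ∈ Finset.range n,
      (dig x i : ℤ_[2]) * 2 ^ i * inv3 ^ digCount x i := by
    refine Finset.sum_congr rfl fun i hi => ?_
    rw [Finset.mem_range] at hi
    exact hlow i hi
  unfold Phi
  rw [← hx, ← hcs, hc0, htail, hsum]
  ring

lemma phi_congr {n : ℕ} {x y : ℤ_[2]} (h : (2 : ℤ_[2]) ^ n ∣ x - y) :
    (2 : ℤ_[2]) ^ n ∣ Phi x - Phi y := by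
  have hxy := appr_congr h
  have hx := phi_tail x n
  have hy := phi_tail y n
  rw [hxy] at hx
  refine ⟨tailW y n - tailW x n, ?_⟩
  linear_combination hy - hx

lemma rk_spec (n : ℕ) (x : ℤ_[2]) : x = (x.appr n : ℤ_[2]) + 2 ^ n * Rk n x :=
  (exists_Rk n x).choose_spec

lemma rk_unique {n : ℕ} {x : ℤ_[2]} {z : ℤ_[2]} (h : x = (x.appr n : ℤ_[2]) + 2 ^ n * z) :
    Rk n x = z := by
  have h2 := rk_spec n x
  have h3 : (2 : ℤ_[2]) ^ n * Rk n x = 2 ^ n * z := add_left_cancel (h2.symm.trans h)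
  exact mul_left_cancel₀ (pow_ne_zero n two_nz) h3

lemma rk_comp (m j : ℕ) (y : ℤ_[2]) : Rk (m + j) y = Rk j (Rk m y) := by
  apply rk_unique
  have h1 := rk_spec m y
  have h2 := rk_spec j (Rk m y)
  have happr : y.appr (m + j) = y.appr m + 2 ^ m * (Rk m y).appr j := by
    apply appr_unique
    · have ha1 := PadicInt.appr_lt y m
      have ha2 := PadicInt.appr_lt (Rk m y) j
      have h3 : 2 ^ m * (Rk m y).appr j + y.appr m < 2 ^ m * 2 ^ j := by
        calc 2 ^ m * (Rk m y).appr j + y.appr m < 2 ^ m * (Rk m y).appr j + 2 ^ m := by omega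
          _ = 2 ^ m * ((Rk m y).appr j + 1) := by ring
          _ ≤ 2 ^ m * 2 ^ j := Nat.mul_le_mul_left _ (by omega)
      rw [pow_add]
      omega
    · refine ⟨Rk j (Rk m y), ?_⟩
      push_cast
      rw [pow_add]
      linear_combination h1 + (2 : ℤ_[2]) ^ m * h2
  rw [happr]
  push_cast
  rw [pow_add]
  linear_combination h1 + (2 : ℤ_[2]) ^ m * h2

lemma rk_iterate {p : ℕ} {z : ℤ_[2]} (hz : Rk p z = z) :
    ∀ j s : ℕ, Rk (j * p + s) z = Rk s z := by
  intro j
  induction j with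
  | zero => intro s; simp
  | succ j ih =>
    intro s
    have h1 : (j + 1) * p + s = p + (j * p + s) := by ring
    rw [h1, rk_comp, hz, ih]

lemma isUnit_three : IsUnit (3 : ℤ_[2]) := by
  rw [PadicInt.isUnit_iff]
  have h1 : ¬ ((2 : ℤ) ∣ 3) := by decide
  have h2 : ¬ ‖((3 : ℤ) : ℤ_[2])‖ < 1 := fun hlt =>
    h1 ((PadicInt.norm_int_lt_one_iff_dvd (p := 2) 3).mp hlt)
  have h3 : ((3 : ℤ) : ℤ_[2]) = (3 : ℤ_[2]) := by push_cast; ring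
  rw [h3] at h2
  have h4 := PadicInt.norm_le_one (3 : ℤ_[2])
  linarith [lt_or_eq_of_le h4, not_lt.mp h2]

lemma inv3_mul_three : inv3 * 3 = 1 := by
  unfold inv3
  exact Ring.inverse_mul_cancel _ isUnit_three

lemma key_pow : ∀ H : ℕ, 1 ≤ H → (2 : ℤ_[2]) ^ (H + 2) ∣ (3 : ℤ_[2]) ^ (2 ^ H) - 1 := by
  intro H
  induction H with
  | zero => omega
  | succ H ih =>
    intro _
    by_cases hH : 1 ≤ H
    · have h1 := ih hH
      have h2 : (3 : ℤ_[2]) ^ (2 ^ (H + 1)) - 1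
          = ((3 : ℤ_[2]) ^ (2 ^ H) - 1) * ((3 : ℤ_[2]) ^ (2 ^ H) + 1) := by
        rw [pow_succ, pow_mul]
        ring
      have h3 : (2 : ℤ_[2]) ∣ (3 : ℤ_[2]) ^ (2 ^ H) + 1 := by
        obtain ⟨w, hw⟩ := h1
        refine ⟨2 ^ (H + 1) * w + 1, ?_⟩
        rw [show (2 : ℤ_[2]) * (2 ^ (H + 1) * w + 1) = 2 ^ (H + 2) * w + 2 from by ring]
        linear_combination hw
      rw [h2, show H + 1 + 2 = (H + 2) + 1 from by omega, pow_succ]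
      exact mul_dvd_mul h1 h3
    · have h0 : H = 0 := by omega
      subst h0
      refine ⟨1, ?_⟩
      norm_num
  
lemma dvd_one_sub_inv3 (H m : ℕ) (hH : 1 ≤ H) :
    (2 : ℤ_[2]) ^ (H + 2) ∣ 1 - inv3 ^ (2 ^ H * m) := by
  have h1 : (2 : ℤ_[2]) ^ (H + 2) ∣ (3 : ℤ_[2]) ^ (2 ^ H * m) - 1 := by
    have h2 : (3 : ℤ_[2]) ^ (2 ^ H * m) - 1 = ((3 : ℤ_[2]) ^ (2 ^ H)) ^ m - 1 ^ m := by
      rw [pow_mul]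
      simp
    rw [h2]
    exact dvd_trans (key_pow H hH) (sub_dvd_pow_sub_pow _ 1 m)
  have h3 : inv3 ^ (2 ^ H * m) * (3 : ℤ_[2]) ^ (2 ^ H * m) = 1 := by
    rw [← mul_pow, inv3_mul_three, one_pow]
  have h4 : 1 - inv3 ^ (2 ^ H * m)
      = inv3 ^ (2 ^ H * m) * ((3 : ℤ_[2]) ^ (2 ^ H * m) - 1) := by
    rw [mul_sub, h3, mul_one]
  rw [h4]
  exact Dvd.dvd.mul_left h1 _

lemma bbar_self (b v : ℕ) (hv : 1 ≤ v) : bbar b v = (b : ℤ_[2]) + 2 ^ v * bbar b v := by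
  have hs : Summable (fun i : ℕ => (2 : ℤ_[2]) ^ (v * i)) := by
    apply summable_of_bound
    intro i
    rw [norm_pow, norm_two]
    apply pow_le_pow_of_le_one (by norm_num) (by norm_num)
    exact Nat.le_mul_of_pos_left i hv
  have h0 := Summable.tsum_eq_zero_add hs
  have h1 : (∑' i : ℕ, (2 : ℤ_[2]) ^ (v * (i + 1)))
      = 2 ^ v * ∑' i : ℕ, (2 : ℤ_[2]) ^ (v * i) := by
    rw [show (fun i : ℕ => (2 : ℤ_[2]) ^ (v * (i + 1)))
        = fun i : ℕ => (2 : ℤ_[2]) ^ v * (2 : ℤ_[2]) ^ (v * i) from ?_]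
    · exact Summable.tsum_mul_left _ hs
    · funext i
      rw [← pow_add]
      congr 1
      ring
  unfold bbar
  conv_lhs => rw [h0]
  rw [h1]
  simp only [Nat.mul_zero, pow_zero]
  ring

end Aux12

end Aux12

/-- periodicity of `Φ` on rational 2-adics: with `q = a + 2^k·b̄_{v,∞}`,
if the digits of `Φ(q)` are eventually periodic with preperiod `u` and period `p ≥ 1`,
and `k + tv ≥ u`, then for every `H ≥ 1`,
`R_{k+tv}(Φ(L_{k+tv}(q))) ≡ R_{k+(t+p·2^H)v}(Φ(L_{k+(t+p·2^H)v}(q))) (mod 2^{H+2})`. -/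
theorem stmt12 (a k b v : ℕ) (ha : a < 2 ^ k) (hb : b < 2 ^ v) (hv : 1 ≤ v)
    (q : ℤ_[2]) (hq : q = (a : ℤ_[2]) + 2 ^ k * bbar b v)
    (u p : ℕ) (hp : 1 ≤ p) (hper : Rk (u + p) (Phi q) = Rk u (Phi q))
    (t : ℕ) (ht : u ≤ k + t * v) (H : ℕ) (hH : 1 ≤ H) :
    (2 : ℤ_[2]) ^ (H + 2) ∣
      Rk (k + t * v) (Phi (Lk (k + t * v) q)) -
      Rk (k + (t + p * 2 ^ H) * v) (Phi (Lk (k + (t + p * 2 ^ H) * v) q)) := by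
  have hB : bbar b v = (b : ℤ_[2]) + 2 ^ v * bbar b v := Aux12.bbar_self b v hv
  set P := p * 2 ^ H with hP
  set n := k + t * v with hn
  have hNn : k + (t + P) * v = n + P * v := by rw [hn]; ring
  -- digit lemmas
  have hdq : ∀ r, dig q (k + r) = dig (bbar b v) r := fun r => by
    rw [hq]; exact Aux12.dig_shift ha (bbar b v) r
  have hdb : ∀ r, dig (bbar b v) (v + r) = dig (bbar b v) r := fun r => by
    conv_lhs => rw [hB]
    exact Aux12.dig_shift hb (bbar b v) r
  have hdbj : ∀ j r, dig (bbar b v) (j * v + r) = dig (bbar b v) r := by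
    intro j
    induction j with
    | zero => intro r; simp
    | succ j ih =>
      intro r
      rw [show (j + 1) * v + r = v + (j * v + r) from by ring, hdb, ih]
  have hdcb : ∀ r, digCount (bbar b v) (v + r)
      = digCount (bbar b v) v + digCount (bbar b v) r := by
    intro r
    rw [Aux12.digCount_split (bbar b v) v r]
    congr 1
    unfold digCount
    exact Finset.sum_congr rfl fun i _ => hdb i
  have hdcbj : ∀ j r, digCount (bbar b v) (j * v + r)
      = j * digCount (bbar b v) v + digCount (bbar b v) r := by
    intro j
    induction j with
    | zero => intro r; simp
    | succ j ih =>
      intro r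
      rw [show (j + 1) * v + r = v + (j * v + r) from by ring, hdcb, ih]
      ring
  have hdcq : ∀ r, digCount q (k + r) = digCount q k + digCount (bbar b v) r := by
    intro r
    rw [Aux12.digCount_split q k r]
    congr 1
    unfold digCount
    exact Finset.sum_congr rfl fun i _ => hdq i
  -- periodicity of digits of q over a window of length P*v
  have hdigN : ∀ r, dig q (n + P * v + r) = dig q (n + r) := by
    intro r
    rw [show n + P * v + r = k + (P * v + (t * v + r)) from by rw [hn]; ring, hdq, hdbj,
      show n + r = k + (t * v + r) from by rw [hn]; ring, hdq]
  have hdcN : ∀ r, digCount q (n + P * v + r)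
      = P * digCount (bbar b v) v + digCount q (n + r) := by
    intro r
    rw [show n + P * v + r = k + (P * v + (t * v + r)) from by rw [hn]; ring, hdcq, hdcbj,
      show n + r = k + (t * v + r) from by rw [hn]; ring, hdcq]
    ring
  -- tail comparison
  have hW : Aux12.tailW q (n + P * v)
      = inv3 ^ (P * digCount (bbar b v) v) * Aux12.tailW q n := by
    unfold Aux12.tailW
    rw [← Summable.tsum_mul_left _ (Aux12.summable_tail q n)]
    apply tsum_congr
    intro r
    rw [hdigN r, hdcN r, pow_add]
    ring
  -- Rk of Phi of truncations
  have key : ∀ m : ℕ, Rk m (Phi (Lk m q)) = Rk m (Phi q) + Aux12.tailW q m := by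
    intro m
    apply Aux12.rk_unique
    have h1 := Aux12.phi_tail q m
    have h2 := Aux12.rk_spec m (Phi q)
    have hcong : (2 : ℤ_[2]) ^ m ∣ Phi ((q.appr m : ℕ) : ℤ_[2]) - Phi q := by
      apply Aux12.phi_congr
      have h5 := two_pow_dvd_sub_appr m q
      have h6 : ((q.appr m : ℤ_[2])) - q = -(q - (q.appr m : ℤ_[2])) := by ring
      rw [h6]
      exact dvd_neg.mpr h5
    have happr : (Phi ((q.appr m : ℕ) : ℤ_[2])).appr m = (Phi q).appr m :=
      Aux12.appr_congr hcong
    simp only [Lk]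
    rw [happr]
    linear_combination h1 + h2
  -- periodicity of the digits of Phi q
  have hz : Rk p (Rk u (Phi q)) = Rk u (Phi q) := by
    rw [← Aux12.rk_comp]; exact hper
  have htn : u ≤ n := by rw [hn]; exact ht
  obtain ⟨s, hs⟩ : ∃ s, n = u + s := ⟨n - u, by omega⟩
  have hRper : Rk (n + P * v) (Phi q) = Rk n (Phi q) := by
    have h2 : n + P * v = u + ((2 ^ H * v) * p + s) := by rw [hs, hP]; ring
    rw [h2, Aux12.rk_comp, Aux12.rk_iterate hz, ← Aux12.rk_comp, ← hs]
  -- finish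
  rw [hNn, key n, key (n + P * v), hW, hRper]
  have h3 : (Rk n (Phi q) + Aux12.tailW q n) -
      (Rk n (Phi q) + inv3 ^ (P * digCount (bbar b v) v) * Aux12.tailW q n)
      = (1 - inv3 ^ (P * digCount (bbar b v) v)) * Aux12.tailW q n := by ring
  rw [h3]
  have h4 : P * digCount (bbar b v) v = 2 ^ H * (p * digCount (bbar b v) v) := by
    rw [hP]; ring
  rw [h4]
  exact Dvd.dvd.mul_right (Aux12.dvd_one_sub_inv3 H _ hH) _
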